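/- Let f₊(t) = a₃t³ + a₂t² + a₁⁺t + a₀⁺ and f₋(t) = a₃t³ + a₂t² + a₁⁻t + a₀⁻ with a₃ > 0 and a₁⁺ > a₁⁻, set ε₀ = √((a₁⁺ − a₁⁻)/(12a₃)), and let ε > ε₀. Put τ = ε₀²/ε (so 0 < τ < ε), and define A(u) = ((ε²−τ²)/(2ετ))·[(ε+τ)·f₊′(u+τ−ε) − (ε−τ)·f₋′(u−τ−ε)] + ((ε+τ)·f₊(u+τ−ε) + (ε−τ)·f₋(u−τ−ε))/(2ε). Define B on Ω_ε by B(x₁,x₂) = ((ε−x₂)·A(x₁+x₂−τ) + (x₂−τ)·f₊(x₁+x₂−ε))/(ε−τ) for x₂ ≥ τ, and B(x₁,x₂) = ((ε+x₂)·A(x₁−x₂+τ) + (τ−x₂)·f₋(x₁−x₂−ε))/(ε+τ) for x₂ ≤ τ. Then B is diagonally concave on Ω_ε, satisfies B(x₁,ε) = f₊(x₁) and B(x₁,−ε) = f₋(x₁), and is pointwise minimal: for every diagonally concave H : Ω_ε → ℝ with H(x₁,ε) = f₊(x₁) and H(x₁,−ε) = f₋(x₁) for all x₁, one has B(x) ≤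 H(x) for all x ∈ Ω_ε. -/

import Mathlib

open Set

noncomputable section

/-- The horizontal strip `Ω_ε = ℝ × [-ε, ε]`. -/
def strip (ε : ℝ) : Set (ℝ × ℝ) := {x : ℝ × ℝ | -ε ≤ x.2 ∧ x.2 ≤ ε}

/-- Diagonal concavity: concavity along every segment parallel to `(1,1)` or `(1,-1)`
contained in the set. -/
def DiagConcaveOn (S : Set (ℝ × ℝ)) (G : ℝ × ℝ → ℝ) : Prop :=
  ∀ a b : ℝ × ℝ, a ∈ S → b ∈ S →
    (b.1 - a.1 = b.2 - a.2 ∨ b.1 - a.1 = -(b.2 - a.2)) →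
    segment ℝ a b ⊆ S →
    ∀ θ : ℝ, 0 ≤ θ → θ ≤ 1 →
      θ * G a + (1 - θ) * G b ≤ G (θ • a + (1 - θ) • b)

/-- A cubic polynomial. -/
def cubic (a₃ a₂ a₁ a₀ : ℝ) : ℝ → ℝ := fun t => a₃ * t ^ 3 + a₂ * t ^ 2 + a₁ * t + a₀

/-- For cubic boundary data with equal leading and quadratic coefficients, `a₃ > 0`,
`a₁⁺ > a₁⁻` and `ε > ε₀`, the left-herringbone candidate with horizontal spine
`x₂ = τ = ε₀²/ε` is the minimal diagonally concave function with boundary values `f₊, f₋`. -/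

lemma cubic_deriv (a₃ a₂ a₁ a₀ x : ℝ) :
    deriv (cubic a₃ a₂ a₁ a₀) x = 3 * a₃ * x ^ 2 + 2 * a₂ * x + a₁ := by
  have h : HasDerivAt (cubic a₃ a₂ a₁ a₀) (3 * a₃ * x ^ 2 + 2 * a₂ * x + a₁) x := by
    have h1 : HasDerivAt (fun t : ℝ => a₃ * t ^ 3 + (a₂ * t ^ 2 + (a₁ * t + a₀)))
        (a₃ * (↑3 * x ^ 2) + (a₂ * (↑2 * x ^ 1) + (a₁ * 1 + 0))) x := by
      exact (((hasDerivAt_pow 3 x).const_mul a₃).add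
        (((hasDerivAt_pow 2 x).const_mul a₂).add
          (((hasDerivAt_id x).const_mul a₁).add (hasDerivAt_const x a₀))))
    have h2 : (fun t : ℝ => a₃ * t ^ 3 + (a₂ * t ^ 2 + (a₁ * t + a₀))) = cubic a₃ a₂ a₁ a₀ := by
      funext t; simp [cubic]; ring
    rw [h2] at h1
    convert h1 using 1
    push_cast
    ring
  exact h.deriv

lemma mem_strip {ε p q : ℝ} (h1 : -ε ≤ q) (h2 : q ≤ ε) : ((p, q) : ℝ × ℝ) ∈ strip ε :=
  ⟨h1, h2⟩

lemma strip_seg {ε : ℝ} {a b : ℝ × ℝ} (ha : a ∈ strip ε) (hb : b ∈ strip ε) :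
    segment ℝ a b ⊆ strip ε := by
  rintro z ⟨p, q, hp, hq, hpq, rfl⟩
  obtain ⟨ha1, ha2⟩ := ha; obtain ⟨hb1, hb2⟩ := hb
  constructor <;> simp only [Prod.snd_add, Prod.smul_snd, smul_eq_mul] <;> nlinarith

lemma relu_cube (w1 w2 θ : ℝ) (h0 : 0 ≤ θ) (h1 : θ ≤ 1) :
    max (θ * w1 + (1 - θ) * w2) 0 ^ 3 ≤ θ * max w1 0 ^ 3 + (1 - θ) * max w2 0 ^ 3 := by
  set p := max w1 0 with hp
  set q := max w2 0 with hq
  have hp0 : 0 ≤ p := le_max_right _ _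
  have hq0 : 0 ≤ q := le_max_right _ _
  have hw1 : w1 ≤ p := le_max_left _ _
  have hw2 : w2 ≤ q := le_max_left _ _
  have hm : max (θ * w1 + (1 - θ) * w2) 0 ≤ θ * p + (1 - θ) * q := by
    apply max_le _ (by nlinarith)
    nlinarith
  have h3 : max (θ * w1 + (1 - θ) * w2) 0 ^ 3 ≤ (θ * p + (1 - θ) * q) ^ 3 :=
    pow_le_pow_left₀ (le_max_right _ _) hm 3
  have h4 : (θ * p + (1 - θ) * q) ^ 3 ≤ θ * p ^ 3 + (1 - θ) * q ^ 3 := by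
    nlinarith [mul_nonneg (mul_nonneg h0 (sub_nonneg.2 h1)) (sq_nonneg (p - q)),
      mul_nonneg (mul_nonneg (mul_nonneg h0 (sub_nonneg.2 h1)) (sq_nonneg (p - q))) hp0,
      mul_nonneg (mul_nonneg (mul_nonneg h0 (sub_nonneg.2 h1)) (sq_nonneg (p - q))) hq0]
  linarith

set_option maxHeartbeats 2000000 in
theorem cubic_large_eps_bellman
    (a₃ a₂ a1p a1m a0p a0m : ℝ) (ha₃ : 0 < a₃) (ha₁ : a1m < a1p)
    (ε ε₀ τ : ℝ)
    (hε₀ : ε₀ = Real.sqrt ((a1p - a1m) / (12 * a₃)))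
    (hεbig : ε₀ < ε)
    (hτ : τ = ε₀ ^ 2 / ε)
    (fp fm : ℝ → ℝ)
    (hfp : fp = cubic a₃ a₂ a1p a0p) (hfm : fm = cubic a₃ a₂ a1m a0m)
    (A : ℝ → ℝ)
    (hA : ∀ u : ℝ, A u =
      ((ε ^ 2 - τ ^ 2) / (2 * ε * τ)) *
        ((ε + τ) * deriv fp (u + τ - ε) - (ε - τ) * deriv fm (u - τ - ε)) +
      ((ε + τ) * fp (u + τ - ε) + (ε - τ) * fm (u - τ - ε)) / (2 * ε))
    (B : ℝ × ℝ → ℝ)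
    (hB : ∀ x : ℝ × ℝ, B x =
      if τ ≤ x.2 then
        ((ε - x.2) * A (x.1 + x.2 - τ) + (x.2 - τ) * fp (x.1 + x.2 - ε)) / (ε - τ)
      else
        ((ε + x.2) * A (x.1 - x.2 + τ) + (τ - x.2) * fm (x.1 - x.2 - ε)) / (ε + τ)) :
    DiagConcaveOn (strip ε) B ∧
    (∀ x₁ : ℝ, B (x₁, ε) = fp x₁ ∧ B (x₁, -ε) = fm x₁) ∧
    (∀ H : ℝ × ℝ → ℝ, DiagConcaveOn (strip ε) H →
      (∀ x₁ : ℝ, H (x₁, ε) = fp x₁ ∧ H (x₁, -ε) = fm x₁) →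
      ∀ x ∈ strip ε, B x ≤ H x) := by
  -- basic positivity facts
  have hdpos : 0 < (a1p - a1m) / (12 * a₃) := div_pos (by linarith) (by linarith)
  have hε0pos : 0 < ε₀ := by rw [hε₀]; exact Real.sqrt_pos.2 hdpos
  have hεpos : 0 < ε := lt_trans hε0pos hεbig
  have hsq : ε₀ ^ 2 = (a1p - a1m) / (12 * a₃) := by
    rw [hε₀, Real.sq_sqrt hdpos.le]
  have hτpos : 0 < τ := by rw [hτ]; positivity
  have hτlt : τ < ε := by
    rw [hτ, div_lt_iff₀ hεpos]; nlinarith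
  have hτε : τ * ε = ε₀ ^ 2 := by rw [hτ]; field_simp
  have hkey : a1p = a1m + 12 * a₃ * (ε * τ) := by
    have h2 : ε₀ ^ 2 * (12 * a₃) = a1p - a1m := by
      rw [hsq]; field_simp
    nlinarith [h2, hτε]
  have hene : ε ≠ 0 := ne_of_gt hεpos
  have hτne : τ ≠ 0 := ne_of_gt hτpos
  have hemt : (0:ℝ) < ε - τ := by linarith
  have hept : (0:ℝ) < ε + τ := by linarith
  have hemtne : ε - τ ≠ 0 := ne_of_gt hemt
  have heptne : ε + τ ≠ 0 := ne_of_gt hept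
  -- explicit formulas
  have hfp' : ∀ x : ℝ, fp x = a₃ * x ^ 3 + a₂ * x ^ 2 + a1p * x + a0p := by
    intro x; rw [hfp]; rfl
  have hfm' : ∀ x : ℝ, fm x = a₃ * x ^ 3 + a₂ * x ^ 2 + a1m * x + a0m := by
    intro x; rw [hfm]; rfl
  have hdp : ∀ x : ℝ, deriv fp x = 3 * a₃ * x ^ 2 + 2 * a₂ * x + a1p := by
    intro x; rw [hfp, cubic_deriv]
  have hdm : ∀ x : ℝ, deriv fm x = 3 * a₃ * x ^ 2 + 2 * a₂ * x + a1m := by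
    intro x; rw [hfm, cubic_deriv]
  have hA' : ∀ u : ℝ, A u = a₃ * u ^ 3 + a₂ * u ^ 2 + (a1m + 3 * a₃ * (ε + τ) ^ 2) * u
      + ((a0p + a0m) / 2 + (a0p - a0m) * τ / (2 * ε) + a₂ * (ε ^ 2 - τ ^ 2)
         + 2 * a₃ * (ε ^ 4 - τ ^ 4) / ε) := by
    intro u
    rw [hA, hdp, hdm, hfp', hfm', hkey]
    field_simp
    ring
  -- the two global representations of B
  have hB1 : ∀ x : ℝ × ℝ, B x =
      ((ε + x.2) * A (x.1 - x.2 + τ) + (τ - x.2) * fm (x.1 - x.2 - ε)) / (ε + τ)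
        - 4 * a₃ * (max (x.2 - τ) 0) ^ 3 := by
    intro x
    rw [hB]
    by_cases h : τ ≤ x.2
    · rw [if_pos h, max_eq_left (by linarith : (0:ℝ) ≤ x.2 - τ)]
      simp only [hA', hfp', hfm']
      rw [hkey]
      field_simp
      ring
    · rw [if_neg h, max_eq_right (by push_neg at h; linarith : x.2 - τ ≤ (0:ℝ))]
      ring
  have hB2 : ∀ x : ℝ × ℝ, B x =
      ((ε - x.2) * A (x.1 + x.2 - τ) + (x.2 - τ) * fp (x.1 + x.2 - ε)) / (ε - τ)
        - 4 * a₃ * (max (τ - x.2) 0) ^ 3 := by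
    intro x
    rw [hB]
    by_cases h : τ ≤ x.2
    · rw [if_pos h, max_eq_right (by linarith : τ - x.2 ≤ (0:ℝ))]
      ring
    · rw [if_neg h, max_eq_left (by push_neg at h; linarith : (0:ℝ) ≤ τ - x.2)]
      simp only [hA', hfp', hfm']
      rw [hkey]
      field_simp
      ring
  -- Part 1 : diagonal concavity
  have part1 : DiagConcaveOn (strip ε) B := by
    intro a b ha hb hdir hseg θ hθ0 hθ1
    have hc1 : (θ • a + (1 - θ) • b).1 = θ * a.1 + (1 - θ) * b.1 := by
      simp [Prod.smul_fst, Prod.fst_add]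
    have hc2 : (θ • a + (1 - θ) • b).2 = θ * a.2 + (1 - θ) * b.2 := by
      simp [Prod.smul_snd, Prod.snd_add]
    rcases hdir with hdir | hdir
    · -- direction (1,1) : use hB1, a.1 - a.2 = b.1 - b.2
      have hd : b.1 - b.2 = a.1 - a.2 := by linarith
      rw [hB1 a, hB1 b, hB1 (θ • a + (1 - θ) • b), hc1, hc2, hd]
      have harg : θ * a.1 + (1 - θ) * b.1 - (θ * a.2 + (1 - θ) * b.2) = a.1 - a.2 := by
        nlinarith [hd]
      rw [harg]
      have hmax : θ * a.2 + (1 - θ) * b.2 - τ = θ * (a.2 - τ) + (1 - θ) * (b.2 - τ) := by ring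
      rw [hmax]
      have key := relu_cube (a.2 - τ) (b.2 - τ) θ hθ0 hθ1
      have key' := mul_le_mul_of_nonneg_left key (by linarith : (0:ℝ) ≤ 4 * a₃)
      have haff : θ * (((ε + a.2) * A (a.1 - a.2 + τ) + (τ - a.2) * fm (a.1 - a.2 - ε)) / (ε + τ))
          + (1 - θ) * (((ε + b.2) * A (a.1 - a.2 + τ) + (τ - b.2) * fm (a.1 - a.2 - ε)) / (ε + τ))
          = ((ε + (θ * a.2 + (1 - θ) * b.2)) * A (a.1 - a.2 + τ)
              + (τ - (θ * a.2 + (1 - θ) * b.2)) * fm (a.1 - a.2 - ε)) / (ε + τ) := by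
        field_simp
        ring
      linarith [haff, key']
    · -- direction (1,-1) : use hB2, a.1 + a.2 = b.1 + b.2
      have hd : b.1 + b.2 = a.1 + a.2 := by linarith
      rw [hB2 a, hB2 b, hB2 (θ • a + (1 - θ) • b), hc1, hc2, hd]
      have harg : θ * a.1 + (1 - θ) * b.1 + (θ * a.2 + (1 - θ) * b.2) = a.1 + a.2 := by
        nlinarith [hd]
      rw [harg]
      have hmax : τ - (θ * a.2 + (1 - θ) * b.2) = θ * (τ - a.2) + (1 - θ) * (τ - b.2) := by ring
      rw [hmax]
      have key := relu_cube (τ - a.2) (τ - b.2) θ hθ0 hθ1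
      have key' := mul_le_mul_of_nonneg_left key (by linarith : (0:ℝ) ≤ 4 * a₃)
      have haff : θ * (((ε - a.2) * A (a.1 + a.2 - τ) + (a.2 - τ) * fp (a.1 + a.2 - ε)) / (ε - τ))
          + (1 - θ) * (((ε - b.2) * A (a.1 + a.2 - τ) + (b.2 - τ) * fp (a.1 + a.2 - ε)) / (ε - τ))
          = ((ε - (θ * a.2 + (1 - θ) * b.2)) * A (a.1 + a.2 - τ)
              + ((θ * a.2 + (1 - θ) * b.2) - τ) * fp (a.1 + a.2 - ε)) / (ε - τ) := by
        field_simp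
        ring
      linarith [haff, key']
  -- Part 2 : boundary values
  have part2 : ∀ x₁ : ℝ, B (x₁, ε) = fp x₁ ∧ B (x₁, -ε) = fm x₁ := by
    intro x₁
    constructor
    · rw [hB]
      simp only
      rw [if_pos hτlt.le]
      have h1 : x₁ + ε - ε = x₁ := by ring
      rw [h1]
      field_simp
      ring
    · rw [hB]
      simp only
      rw [if_neg (by push_neg; linarith : ¬ τ ≤ -ε)]
      have h1 : x₁ - (-ε) - ε = x₁ := by ring
      rw [h1]
      field_simp
      ring
  refine ⟨part1, part2, ?_⟩
  -- Part 3 : minimality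
  intro H hH hHbd
  have hbdp : ∀ x₁ : ℝ, H (x₁, ε) = fp x₁ := fun x₁ => (hHbd x₁).1
  have hbdm : ∀ x₁ : ℝ, H (x₁, -ε) = fm x₁ := fun x₁ => (hHbd x₁).2
  -- full-chord lower bound on the spine
  have hM0 : ∀ v : ℝ, A v - 2 * a₃ * (ε - τ) ^ 3 * (ε + τ) / ε ≤ H (v, τ) := by
    intro v
    have hθ0 : (0:ℝ) ≤ (ε - τ) / (2 * ε) := by positivity
    have hθ1 : (ε - τ) / (2 * ε) ≤ 1 := by
      rw [div_le_one (by linarith)]; linarith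
    have hmem1 : ((v - τ - ε, -ε) : ℝ × ℝ) ∈ strip ε := mem_strip (le_refl _) (by linarith)
    have hmem2 : ((v - τ + ε, ε) : ℝ × ℝ) ∈ strip ε := mem_strip (by linarith) (le_refl _)
    have hch := hH _ _ hmem1 hmem2 (Or.inl (by simp))
      (strip_seg hmem1 hmem2) ((ε - τ) / (2 * ε)) hθ0 hθ1
    have hpt : ((ε - τ) / (2 * ε)) • ((v - τ - ε, -ε) : ℝ × ℝ)
        + (1 - (ε - τ) / (2 * ε)) • ((v - τ + ε, ε) : ℝ × ℝ) = (v, τ) := by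
      rw [Prod.ext_iff]
      constructor <;> simp <;> field_simp <;> ring
    rw [hpt, hbdm, hbdp] at hch
    have hid : (ε - τ) / (2 * ε) * fm (v - τ - ε) + (1 - (ε - τ) / (2 * ε)) * fp (v - τ + ε)
        = A v - 2 * a₃ * (ε - τ) ^ 3 * (ε + τ) / ε := by
      simp only [hA', hfp', hfm']; rw [hkey]; field_simp; ring
    linarith
  -- one-step herringbone inequality
  have hstep : ∀ tt : ℝ, 0 < tt → tt < ε - τ → ∀ v : ℝ,
      A v - H (v, τ) ≤ (1 - tt / (ε + τ + tt)) * (1 - tt / (ε - τ))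
          * (A (v + 2 * tt) - H (v + 2 * tt, τ))
        + 4 * a₃ * tt ^ 3 * (ε + τ) / (ε + τ + tt) := by
    intro tt htt0 htt1 v
    have hsumne : ε + τ + tt ≠ 0 := by positivity
    have hθ₁0 : (0:ℝ) ≤ tt / (ε + τ + tt) := by positivity
    have hθ₁1 : tt / (ε + τ + tt) ≤ 1 := by
      rw [div_le_one (by positivity)]; linarith
    have hσ0 : (0:ℝ) ≤ tt / (ε - τ) := by positivity
    have hσ1 : tt / (ε - τ) ≤ 1 := by
      rw [div_le_one hemt]; linarith
    -- chord 1 : from (v-τ-ε,-ε) to (v+tt, τ+tt), hitting (v,τ)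
    have hmem1 : ((v - τ - ε, -ε) : ℝ × ℝ) ∈ strip ε := mem_strip (le_refl _) (by linarith)
    have hmem2 : ((v + tt, τ + tt) : ℝ × ℝ) ∈ strip ε := mem_strip (by linarith) (by linarith)
    have hch1 := hH _ _ hmem1 hmem2 (Or.inl (by simp; try ring))
      (strip_seg hmem1 hmem2) (tt / (ε + τ + tt)) hθ₁0 hθ₁1
    have hpt1 : (tt / (ε + τ + tt)) • ((v - τ - ε, -ε) : ℝ × ℝ)
        + (1 - tt / (ε + τ + tt)) • ((v + tt, τ + tt) : ℝ × ℝ) = (v, τ) := by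
      rw [Prod.ext_iff]
      constructor <;> simp <;> field_simp <;> ring
    rw [hpt1, hbdm] at hch1
    -- chord 2 : from (v+2tt, τ) to (v+2tt+τ-ε, ε), hitting (v+tt, τ+tt)
    have hmem3 : ((v + 2 * tt, τ) : ℝ × ℝ) ∈ strip ε := mem_strip (by linarith) (by linarith)
    have hmem4 : ((v + 2 * tt + τ - ε, ε) : ℝ × ℝ) ∈ strip ε := mem_strip (by linarith) (le_refl _)
    have hch2 := hH _ _ hmem3 hmem4 (Or.inr (by simp; try ring))
      (strip_seg hmem3 hmem4) (1 - tt / (ε - τ)) (by linarith) (by linarith)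
    have hpt2 : (1 - tt / (ε - τ)) • ((v + 2 * tt, τ) : ℝ × ℝ)
        + (1 - (1 - tt / (ε - τ))) • ((v + 2 * tt + τ - ε, ε) : ℝ × ℝ)
        = (v + tt, τ + tt) := by
      rw [Prod.ext_iff]
      constructor <;> simp <;> field_simp <;> ring
    rw [hpt2, hbdp] at hch2
    -- exact algebraic identity for A
    have hexact : A v = (tt / (ε + τ + tt)) * fm (v - τ - ε)
        + (1 - tt / (ε + τ + tt)) * (tt / (ε - τ)) * fp (v + 2 * tt + τ - ε)
        + (1 - tt / (ε + τ + tt)) * (1 - tt / (ε - τ)) * A (v + 2 * tt)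
        + 4 * a₃ * tt ^ 3 * (ε + τ) / (ε + τ + tt) := by
      simp only [hA', hfp', hfm']; rw [hkey]; field_simp; ring
    have hch2' := mul_le_mul_of_nonneg_left hch2
      (by linarith : (0:ℝ) ≤ 1 - tt / (ε + τ + tt))
    nlinarith [hch1, hch2', hexact]
  -- iteration : spine bound
  have hmain : ∀ v : ℝ, A v ≤ H (v, τ) := by
    intro v
    by_contra hcon
    push_neg at hcon
    have hXpos : 0 < A v - H (v, τ) := by linarith
    have hKpos : 0 < 2 * a₃ * (ε + τ) * (ε - τ) / ε := by positivity
    set X := A v - H (v, τ) with hX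
    set K := 2 * a₃ * (ε + τ) * (ε - τ) / ε with hK
    set tt := min ((ε - τ) / 2) (Real.sqrt (X / (2 * K))) with htt
    have htt0 : 0 < tt := lt_min (by linarith) (Real.sqrt_pos.2 (by positivity))
    have htt1 : tt < ε - τ := lt_of_le_of_lt (min_le_left _ _) (by linarith)
    have htt2 : K * tt ^ 2 ≤ X / 2 := by
      have h1 : tt ≤ Real.sqrt (X / (2 * K)) := min_le_right _ _
      have h2 : tt ^ 2 ≤ X / (2 * K) := by
        rw [← Real.sq_sqrt (show (0:ℝ) ≤ X / (2 * K) by positivity)]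
        exact pow_le_pow_left₀ htt0.le h1 2
      calc K * tt ^ 2 ≤ K * (X / (2 * K)) := by nlinarith
        _ = X / 2 := by field_simp
    set c := (1 - tt / (ε + τ + tt)) * (1 - tt / (ε - τ)) with hc
    have hsumpos : (0:ℝ) < ε + τ + tt := by positivity
    have hc0 : 0 ≤ c := by
      apply mul_nonneg
      · have : tt / (ε + τ + tt) ≤ 1 := by rw [div_le_one hsumpos]; linarith
        linarith
      · have : tt / (ε - τ) ≤ 1 := by rw [div_le_one hemt]; linarith
        linarith
    have hc1 : c < 1 := by
      have h1 : 0 < tt / (ε - τ) := by positivity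
      have h2 : tt / (ε - τ) ≤ 1 := by rw [div_le_one hemt]; linarith
      have h3 : 0 ≤ (tt / (ε + τ + tt)) * (1 - tt / (ε - τ)) :=
        mul_nonneg (by positivity) (by linarith)
      rw [hc]; nlinarith
    set R := 2 * a₃ * (ε - τ) ^ 3 * (ε + τ) / ε with hR
    have hR0 : 0 ≤ R := by rw [hR]; positivity
    have hEc : 4 * a₃ * tt ^ 3 * (ε + τ) / (ε + τ + tt) = (1 - c) * (K * tt ^ 2) := by
      rw [hc, hK]; field_simp; ring
    have hiter : ∀ n : ℕ, ∀ w : ℝ, A w - H (w, τ) ≤ K * tt ^ 2 + c ^ n * R := by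
      intro n
      induction n with
      | zero =>
        intro w
        have h0 := hM0 w
        have hKt : 0 ≤ K * tt ^ 2 := by positivity
        simp only [pow_zero, one_mul]
        rw [hR]
        linarith
      | succ n ih =>
        intro w
        have h1 := hstep tt htt0 htt1 w
        rw [hEc] at h1
        have h2 := ih (w + 2 * tt)
        have h3 := mul_le_mul_of_nonneg_left h2 hc0
        calc A w - H (w, τ) ≤ c * (A (w + 2 * tt) - H (w + 2 * tt, τ)) + (1 - c) * (K * tt ^ 2) := h1
          _ ≤ c * (K * tt ^ 2 + c ^ n * R) + (1 - c) * (K * tt ^ 2) := by linarith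
          _ = K * tt ^ 2 + c ^ (n + 1) * R := by ring
    have hlim : Filter.Tendsto (fun n : ℕ => K * tt ^ 2 + c ^ n * R) Filter.atTop
        (nhds (K * tt ^ 2)) := by
      have h0 : Filter.Tendsto (fun n : ℕ => c ^ n) Filter.atTop (nhds 0) :=
        tendsto_pow_atTop_nhds_zero_of_lt_one hc0 hc1
      have := Filter.Tendsto.add (tendsto_const_nhds
        (x := K * tt ^ 2) (f := Filter.atTop (α := ℕ))) (h0.mul_const R)
      simpa using this
    have hXle : X ≤ K * tt ^ 2 := ge_of_tendsto' hlim (fun n => hiter n v)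
    linarith
  -- propagate from the spine to the whole strip
  intro x hx
  obtain ⟨hx1, hx2⟩ := hx
  by_cases h : τ ≤ x.2
  · -- upper region
    have hθ0 : (0:ℝ) ≤ (ε - x.2) / (ε - τ) := by
      apply div_nonneg _ hemt.le; linarith
    have hθ1 : (ε - x.2) / (ε - τ) ≤ 1 := by
      rw [div_le_one hemt]; linarith
    have hmemS : ((x.1 + x.2 - τ, τ) : ℝ × ℝ) ∈ strip ε := mem_strip (by linarith) (by linarith)
    have hmemT : ((x.1 + x.2 - ε, ε) : ℝ × ℝ) ∈ strip ε := mem_strip (by linarith) (le_refl _)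
    have hch := hH _ _ hmemS hmemT (Or.inr (by simp; try ring))
      (strip_seg hmemS hmemT) ((ε - x.2) / (ε - τ)) hθ0 hθ1
    have hpt : ((ε - x.2) / (ε - τ)) • ((x.1 + x.2 - τ, τ) : ℝ × ℝ)
        + (1 - (ε - x.2) / (ε - τ)) • ((x.1 + x.2 - ε, ε) : ℝ × ℝ) = x := by
      rw [Prod.ext_iff]
      constructor <;> simp <;> field_simp <;> ring
    rw [hpt, hbdp] at hch
    have hBx : B x = ((ε - x.2) / (ε - τ)) * A (x.1 + x.2 - τ)
        + (1 - (ε - x.2) / (ε - τ)) * fp (x.1 + x.2 - ε) := by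
      rw [hB, if_pos h]; field_simp; try ring
    have hsp := hmain (x.1 + x.2 - τ)
    have hθA := mul_le_mul_of_nonneg_left hsp hθ0
    linarith [hch, hθA, hBx.le, hBx.ge]
  · -- lower region
    push_neg at h
    have hθ0 : (0:ℝ) ≤ (ε + x.2) / (ε + τ) := by
      apply div_nonneg _ hept.le; linarith
    have hθ1 : (ε + x.2) / (ε + τ) ≤ 1 := by
      rw [div_le_one hept]; linarith
    have hmemS : ((x.1 - x.2 + τ, τ) : ℝ × ℝ) ∈ strip ε := mem_strip (by linarith) (by linarith)
    have hmemT : ((x.1 - x.2 - ε, -ε) : ℝ × ℝ) ∈ strip ε := mem_strip (le_refl _) (by linarith)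
    have hch := hH _ _ hmemS hmemT (Or.inl (by simp; try ring))
      (strip_seg hmemS hmemT) ((ε + x.2) / (ε + τ)) hθ0 hθ1
    have hpt : ((ε + x.2) / (ε + τ)) • ((x.1 - x.2 + τ, τ) : ℝ × ℝ)
        + (1 - (ε + x.2) / (ε + τ)) • ((x.1 - x.2 - ε, -ε) : ℝ × ℝ) = x := by
      rw [Prod.ext_iff]
      constructor <;> simp <;> field_simp <;> ring
    rw [hpt, hbdm] at hch
    have hBx : B x = ((ε + x.2) / (ε + τ)) * A (x.1 - x.2 + τ)
        + (1 - (ε + x.2) / (ε + τ)) * fm (x.1 - x.2 - ε) := by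
      rw [hB, if_neg (by push_neg; exact h)]; field_simp; try ring
    have hsp := hmain (x.1 - x.2 + τ)
    have hθA := mul_le_mul_of_nonneg_left hsp hθ0
    linarith [hch, hθA, hBx.le, hBx.ge]
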